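/- The Bell numbers satisfy B_n^{(n+1)/n} ≤ B_{n+1} for all n ≥ 1, and consequently B_n / B_{n+1} ≤ B_n^{−1/n}. -/

import Mathlib

open Finset Nat
open scoped ENNReal NNReal

/-- The Bell number `B k`: the number of equivalence relations on a `k`-element set. -/
noncomputable def bell (k : ℕ) : ℕ := Nat.card {r : Fin k → Fin k → Prop // Equivalence r}

instance setoidFinite (α : Type*) [Finite α] : Finite (Setoid α) :=
  Finite.of_injective (fun s : Setoid α => s.r) fun a b h =>
    Setoid.ext fun x y => by simp only at h; rw [show a.r = b.r from h]

def bellEquiv (α : Type*) : {r : α → α → Prop // Equivalence r} ≃ Setoid α where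
  toFun r := ⟨r.1, r.2⟩
  invFun s := ⟨s.1, s.2⟩
  left_inv _ := rfl
  right_inv _ := rfl

def setoidCongr {α β : Type*} (e : α ≃ β) : Setoid α ≃ Setoid β where
  toFun s := Setoid.comap e.symm s
  invFun s := Setoid.comap e s
  left_inv s := Setoid.ext fun x y => by simp [Setoid.comap_rel]
  right_inv s := Setoid.ext fun x y => by simp [Setoid.comap_rel]

theorem bell_eq_card (k : ℕ) : bell k = Nat.card (Setoid (Fin k)) :=
  Nat.card_congr (bellEquiv _)

theorem setoid_card_congr {α β : Type*} (e : α ≃ β) :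
    Nat.card (Setoid α) = Nat.card (Setoid β) := Nat.card_congr (setoidCongr e)

theorem bell_zero : bell 0 = 1 := by
  rw [bell_eq_card]
  have : Subsingleton (Setoid (Fin 0)) :=
    ⟨fun a b => Setoid.ext fun x => x.elim0⟩
  have : Nonempty (Setoid (Fin 0)) := ⟨⊥⟩
  rw [Nat.card_eq_one_iff_unique]
  exact ⟨‹_›, ‹_›⟩

theorem nat_card_sigma {ι : Type*} [Fintype ι] (f : ι → Type*) [∀ i, Finite (f i)] :
    Nat.card (Σ i, f i) = ∑ i, Nat.card (f i) := by
  have : ∀ i, Fintype (f i) := fun i => Fintype.ofFinite _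
  classical
  simp [Nat.card_eq_fintype_card]


/-- Lift a setoid on `β` to `Option β` with `none` its own class. -/
def optSetoid {β : Type*} (t : Setoid β) : Setoid (Option β) where
  r u v := (u = none ∧ v = none) ∨ ∃ a b, u = some a ∧ v = some b ∧ t a b
  iseqv := by
    constructor
    · rintro (_ | a)
      · exact Or.inl ⟨rfl, rfl⟩
      · exact Or.inr ⟨a, a, rfl, rfl, t.refl a⟩
    · rintro u v (⟨rfl, rfl⟩ | ⟨a, b, rfl, rfl, h⟩)
      · exact Or.inl ⟨rfl, rfl⟩
      · exact Or.inr ⟨b, a, rfl, rfl, t.symm h⟩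
    · rintro u v w (⟨rfl, rfl⟩ | ⟨a, b, rfl, rfl, h⟩) h2
      · exact h2
      · rcases h2 with ⟨h3, -⟩ | ⟨a', b', h3, h4, h5⟩
        · exact absurd h3 (Option.some_ne_none b)
        · cases Option.some.inj h3
          exact Or.inr ⟨a, b', rfl, h4, t.trans h h5⟩

variable {α : Type*} [Fintype α] [DecidableEq α]

/-- classification map -/
def cmap (s : Finset α) (x : Option α) : Option {x : α // x ∉ s} :=
  x.bind fun a => if h : a ∈ s then none else some ⟨a, h⟩

/-- the block of `none`, as a finset -/
noncomputable def blockF (t : Setoid (Option α)) : Finset α :=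
  @Finset.filter α (fun a => t (some a) none) (Classical.decPred _) Finset.univ

noncomputable def fiberEquiv (s : Finset α) :
    {t : Setoid (Option α) // blockF t = s} ≃ Setoid {x : α // x ∉ s} where
  toFun t := Setoid.comap (fun x => some x.1) t.1
  invFun t' := ⟨Setoid.comap (cmap s) (optSetoid t'), by
    ext a
    simp only [blockF, Finset.mem_filter, Finset.mem_univ, true_and, Setoid.comap_rel]
    show (optSetoid t') (cmap s (some a)) (cmap s none) ↔ a ∈ s
    simp only [cmap, Option.bind]
    constructor
    · rintro (⟨h, -⟩ | ⟨a', b, h1, h2, -⟩)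
      · by_contra hm
        rw [dif_neg hm] at h; exact Option.some_ne_none _ h
      · exact (Option.some_ne_none b h2.symm).elim
    · intro h; exact Or.inl ⟨by rw [dif_pos h], rfl⟩⟩
  left_inv := by
    rintro ⟨t, ht⟩
    have hmem : ∀ a : α, a ∈ s ↔ t (some a) none := by
      intro a; rw [← ht]; simp [blockF]
    apply Subtype.ext
    apply Setoid.ext
    rintro (_ | a) (_ | b) <;>
      simp only [Setoid.comap_rel, cmap, Option.bind]
    · show (optSetoid _) none none ↔ _
      exact ⟨fun _ => t.refl none, fun _ => Or.inl ⟨rfl, rfl⟩⟩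
    · show (optSetoid _) none (cmap s (some b)) ↔ _
      by_cases hb : b ∈ s
      · simp only [cmap, Option.bind, dif_pos hb]
        exact ⟨fun _ => t.symm ((hmem b).1 hb), fun _ => Or.inl ⟨rfl, rfl⟩⟩
      · simp only [cmap, Option.bind, dif_neg hb]
        constructor
        · rintro (⟨-, h⟩ | ⟨a', b', h', -, -⟩)
          · exact (Option.some_ne_none _ h).elim
          · exact (Option.some_ne_none _ h'.symm).elim
        · intro h; exact (hb ((hmem b).2 (t.symm h))).elim
    · show (optSetoid _) (cmap s (some a)) none ↔ _
      by_cases ha : a ∈ s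
      · simp only [cmap, Option.bind, dif_pos ha]
        exact ⟨fun _ => (hmem a).1 ha, fun _ => Or.inl ⟨rfl, rfl⟩⟩
      · simp only [cmap, Option.bind, dif_neg ha]
        constructor
        · rintro (⟨h, -⟩ | ⟨a', b', -, h', -⟩)
          · exact (Option.some_ne_none _ h).elim
          · exact (Option.some_ne_none _ h'.symm).elim
        · intro h; exact (ha ((hmem a).2 h)).elim
    · show (optSetoid _) (cmap s (some a)) (cmap s (some b)) ↔ _
      by_cases ha : a ∈ s <;> by_cases hb : b ∈ s
      · simp only [cmap, Option.bind, dif_pos ha, dif_pos hb]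
        refine ⟨fun _ => t.trans ((hmem a).1 ha) (t.symm ((hmem b).1 hb)), fun _ => Or.inl ⟨rfl, rfl⟩⟩
      · simp only [cmap, Option.bind, dif_pos ha, dif_neg hb]
        constructor
        · rintro (⟨-, h⟩ | ⟨a', b', h', -, -⟩)
          · exact (Option.some_ne_none _ h).elim
          · exact (Option.some_ne_none _ h'.symm).elim
        · intro h
          exact (hb ((hmem b).2 (t.trans (t.symm h) ((hmem a).1 ha)))).elim
      · simp only [cmap, Option.bind, dif_neg ha, dif_pos hb]
        constructor
        · rintro (⟨h, -⟩ | ⟨a', b', -, h', -⟩)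
          · exact (Option.some_ne_none _ h).elim
          · exact (Option.some_ne_none _ h'.symm).elim
        · intro h
          exact (ha ((hmem a).2 (t.trans h ((hmem b).1 hb)))).elim
      · simp only [cmap, Option.bind, dif_neg ha, dif_neg hb]
        constructor
        · rintro (⟨h, -⟩ | ⟨a', b', h1, h2, h3⟩)
          · exact (Option.some_ne_none _ h).elim
          · cases Option.some.inj h1; cases Option.some.inj h2
            exact h3
        · intro h
          exact Or.inr ⟨⟨a, ha⟩, ⟨b, hb⟩, rfl, rfl, h⟩
  right_inv := by
    intro t'
    apply Setoid.ext
    rintro ⟨a, ha⟩ ⟨b, hb⟩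
    simp only [Setoid.comap_rel]
    show (optSetoid t') (cmap s (some a)) (cmap s (some b)) ↔ _
    simp only [cmap, Option.bind, dif_neg ha, dif_neg hb]
    constructor
    · rintro (⟨h, -⟩ | ⟨a', b', h1, h2, h3⟩)
      · exact (Option.some_ne_none _ h).elim
      · cases Option.some.inj h1; cases Option.some.inj h2; exact h3
    · intro h; exact Or.inr ⟨_, _, rfl, rfl, h⟩

theorem card_setoid_option (α : Type*) [Fintype α] [DecidableEq α] :
    Nat.card (Setoid (Option α)) = ∑ s : Finset α, Nat.card (Setoid {x : α // x ∉ s}) := by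
  rw [← Nat.card_congr (Equiv.sigmaFiberEquiv (blockF (α := α))),
    nat_card_sigma]
  exact Finset.sum_congr rfl fun s _ => Nat.card_congr (fiberEquiv s)

theorem card_not_mem (n : ℕ) (s : Finset (Fin n)) :
    Nat.card (Setoid {x : Fin n // x ∉ s}) = bell (n - s.card) := by
  rw [bell_eq_card]
  apply setoid_card_congr
  have e1 : {x : Fin n // x ∉ s} ≃ {x : Fin n // x ∈ sᶜ} :=
    Equiv.subtypeEquivRight fun x => (Finset.mem_compl).symm
  refine e1.trans (sᶜ.equivFin.trans (finCongr ?_))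
  rw [Finset.card_compl, Fintype.card_fin]

theorem bell_succ (n : ℕ) : bell (n + 1) = ∑ k ∈ range (n + 1), n.choose k * bell k := by
  classical
  rw [bell_eq_card, setoid_card_congr (finSuccEquiv n), card_setoid_option]
  have h1 : ∀ s : Finset (Fin n), Nat.card (Setoid {x : Fin n // x ∉ s}) = bell (n - s.card) :=
    card_not_mem n
  simp_rw [h1]
  rw [← Finset.powerset_univ, Finset.sum_powerset, Finset.card_fin]
  have h2 : ∀ j ∈ range (n + 1),
      ∑ t ∈ Finset.powersetCard j (univ : Finset (Fin n)), bell (n - t.card)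
        = n.choose j * bell (n - j) := by
    intro j _
    rw [Finset.sum_powersetCard j univ (fun c => bell (n - c))]
    simp [Finset.card_univ, mul_comm]
  rw [Finset.sum_congr rfl h2,
    ← Finset.sum_range_reflect (fun k => n.choose k * bell k) (n + 1)]
  refine Finset.sum_congr rfl fun j hj => ?_
  rw [Finset.mem_range] at hj
  have hj' : j ≤ n := Nat.lt_succ_iff.mp hj
  simp only [Nat.add_sub_cancel]
  rw [Nat.choose_symm hj']

theorem bell_pos (k : ℕ) : 0 < bell k := by
  rw [bell_eq_card]
  have : Nonempty (Setoid (Fin k)) := ⟨⊥⟩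
  exact Nat.card_pos


noncomputable def momo (n : ℕ) : ℝ≥0∞ := ∑' k : ℕ, (k : ℝ≥0∞) ^ n / (k ! : ℝ≥0∞)

noncomputable def EE : ℝ≥0∞ := ∑' k : ℕ, ((k ! : ℝ≥0∞))⁻¹

theorem two_pow_le (k : ℕ) : 2 ^ k ≤ 2 * k ! := by
  induction k with
  | zero => norm_num
  | succ k ih =>
    rcases Nat.eq_zero_or_pos k with rfl | hk
    · norm_num
    · calc 2 ^ (k + 1) = 2 * 2 ^ k := by ring
        _ ≤ 2 * (2 * k !) := by omega
        _ ≤ 2 * ((k + 1) * k !) := by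
            have : 2 ≤ k + 1 := by omega
            have := Nat.mul_le_mul_right (k !) this
            omega
        _ = 2 * (k + 1)! := by rw [Nat.factorial_succ]

theorem EE_ne_top : EE ≠ ⊤ := by
  have h : ∀ k : ℕ, ((k ! : ℝ≥0∞))⁻¹ ≤ 2 * (2⁻¹) ^ k := by
    intro k
    have h1 : ((2 : ℝ≥0∞)) ^ k ≤ 2 * (k ! : ℝ≥0∞) := by
      have := two_pow_le k
      exact_mod_cast Nat.cast_le.mpr this
    have h2 : ((2 : ℝ≥0∞) * (k ! : ℝ≥0∞))⁻¹ ≤ ((2 : ℝ≥0∞) ^ k)⁻¹ :=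
      ENNReal.inv_le_inv' h1
    calc ((k ! : ℝ≥0∞))⁻¹ = 2 * ((2 : ℝ≥0∞) * (k ! : ℝ≥0∞))⁻¹ := by
          rw [ENNReal.mul_inv (Or.inl (by norm_num)) (Or.inl (by norm_num)), ← mul_assoc,
            ENNReal.mul_inv_cancel (by norm_num) (by norm_num), one_mul]
      _ ≤ 2 * ((2 : ℝ≥0∞) ^ k)⁻¹ := mul_le_mul_right h2 2
      _ = 2 * (2⁻¹ : ℝ≥0∞) ^ k := by rw [ENNReal.inv_pow]
  have hle : EE ≤ 2 * (1 - 2⁻¹ : ℝ≥0∞)⁻¹ := by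
    calc EE ≤ ∑' k : ℕ, 2 * (2⁻¹ : ℝ≥0∞) ^ k := ENNReal.tsum_le_tsum h
      _ = 2 * ∑' k : ℕ, (2⁻¹ : ℝ≥0∞) ^ k := ENNReal.tsum_mul_left
      _ = 2 * (1 - 2⁻¹ : ℝ≥0∞)⁻¹ := by rw [ENNReal.tsum_geometric]
  refine ne_top_of_le_ne_top ?_ hle
  refine ENNReal.mul_ne_top (by norm_num) (ENNReal.inv_ne_top.mpr ?_)
  have h12 : (2⁻¹ : ℝ≥0∞) < 1 := ENNReal.inv_lt_one.mpr (by norm_num)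
  exact (tsub_pos_of_lt h12).ne'

theorem EE_pos : 1 ≤ EE := by
  have := ENNReal.le_tsum (f := fun k : ℕ => ((k ! : ℝ≥0∞))⁻¹) 0
  simpa [EE] using this

theorem dobinski : ∀ n, momo n = (bell n : ℝ≥0∞) * EE := by
  intro n
  induction n using Nat.strong_induction_on with
  | _ n ih =>
    match n with
    | 0 =>
      rw [_root_.bell_zero]
      simp only [Nat.cast_one, one_mul, momo, EE, pow_zero]
      exact tsum_congr fun k => one_div _
    | n + 1 =>
      have step : momo (n + 1) = ∑ i ∈ range (n + 1), (n.choose i : ℝ≥0∞) * momo i := by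
        rw [momo, tsum_eq_zero_add' ENNReal.summable]
        have h0 : ((0 : ℕ) : ℝ≥0∞) ^ (n + 1) / ((0)! : ℝ≥0∞) = 0 := by simp
        rw [h0, zero_add]
        have hterm : ∀ k : ℕ, ((k + 1 : ℕ) : ℝ≥0∞) ^ (n + 1) / ((k + 1)! : ℝ≥0∞)
            = ∑ i ∈ range (n + 1), (n.choose i : ℝ≥0∞) * ((k : ℝ≥0∞) ^ i / (k ! : ℝ≥0∞)) := by
          intro k
          have hk1 : ((k + 1 : ℕ) : ℝ≥0∞) = (k : ℝ≥0∞) + 1 := by push_cast; ring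
          have hfac : ((k + 1)! : ℝ≥0∞) = ((k : ℝ≥0∞) + 1) * (k ! : ℝ≥0∞) := by
            rw [Nat.factorial_succ]; push_cast; ring
          rw [hk1, hfac, pow_succ, mul_comm (((k : ℝ≥0∞) + 1) ^ n) _,
            ENNReal.mul_div_mul_left _ _ (by simp) (by simp)]
          rw [add_pow]
          simp only [one_pow, mul_one]
          rw [div_eq_mul_inv, Finset.sum_mul]
          refine Finset.sum_congr rfl fun i _ => ?_
          rw [div_eq_mul_inv, mul_comm ((k : ℝ≥0∞) ^ i) _, mul_assoc]
        calc ∑' k : ℕ, ((k + 1 : ℕ) : ℝ≥0∞) ^ (n + 1) / ((k + 1)! : ℝ≥0∞)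
            = ∑' k : ℕ, ∑ i ∈ range (n + 1), (n.choose i : ℝ≥0∞) * ((k : ℝ≥0∞) ^ i / (k ! : ℝ≥0∞)) := by
              exact tsum_congr hterm
          _ = ∑ i ∈ range (n + 1), ∑' k : ℕ, (n.choose i : ℝ≥0∞) * ((k : ℝ≥0∞) ^ i / (k ! : ℝ≥0∞)) := by
              exact (Summable.tsum_finsetSum (fun i _ => ENNReal.summable))
          _ = ∑ i ∈ range (n + 1), (n.choose i : ℝ≥0∞) * momo i := by
              refine Finset.sum_congr rfl fun i _ => ?_
              rw [ENNReal.tsum_mul_left]; rfl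
      rw [step]
      have : ∀ i ∈ range (n + 1), (n.choose i : ℝ≥0∞) * momo i
          = (n.choose i : ℝ≥0∞) * ((bell i : ℝ≥0∞) * EE) := by
        intro i hi
        rw [ih i (by rw [mem_range] at hi; omega)]
      rw [Finset.sum_congr rfl this, _root_.bell_succ]
      push_cast
      rw [Finset.sum_mul]
      congr 1
      ext i
      ring

theorem tsum_holder (w g : ℕ → ℝ≥0∞) {p : ℝ} (hp : 1 ≤ p) :
    ∑' i, w i * g i ≤ (∑' i, w i) ^ (1 - p⁻¹) * (∑' i, w i * g i ^ p) ^ p⁻¹ := by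
  rw [ENNReal.tsum_eq_iSup_sum]
  refine iSup_le fun s => (ENNReal.inner_le_weight_mul_Lp_of_nonneg s hp w g).trans ?_
  have h1 : (0:ℝ) ≤ 1 - p⁻¹ := by
    have : p⁻¹ ≤ 1 := by
      rw [inv_le_one_iff₀]; right; exact hp
    linarith
  have h2 : (0:ℝ) ≤ p⁻¹ := by positivity
  exact mul_le_mul' (ENNReal.rpow_le_rpow (ENNReal.sum_le_tsum s) h1)
    (ENNReal.rpow_le_rpow (ENNReal.sum_le_tsum s) h2)


theorem key (n : ℕ) (hn : 1 ≤ n) :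
    (bell n : ℝ≥0∞) ^ (((n : ℝ) + 1) / n) ≤ (bell (n + 1) : ℝ≥0∞) := by
  set p : ℝ := ((n : ℝ) + 1) / n with hpdef
  have hn0 : (n : ℝ) ≠ 0 := Nat.cast_ne_zero.mpr (by omega)
  have hnpos : (0:ℝ) < n := by positivity
  have hp : 1 ≤ p := by
    rw [hpdef, le_div_iff₀ hnpos]; linarith
  have hp0 : (0:ℝ) < p := lt_of_lt_of_le one_pos hp
  have hEE0 : EE ≠ 0 := (lt_of_lt_of_le one_pos EE_pos).ne'
  have hEEtop : EE ≠ ⊤ := EE_ne_top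
  have hinvp : p⁻¹ * p = 1 := inv_mul_cancel₀ hp0.ne'
  -- Hölder applied to w = 1/k!, g = k^n
  have H := tsum_holder (fun k => ((k ! : ℝ≥0∞))⁻¹) (fun k => (k : ℝ≥0∞) ^ n) hp
  have hwg : (fun k : ℕ => ((k ! : ℝ≥0∞))⁻¹ * (k : ℝ≥0∞) ^ n)
      = fun k : ℕ => (k : ℝ≥0∞) ^ n / (k ! : ℝ≥0∞) := by
    funext k; rw [div_eq_mul_inv, mul_comm]
  have hgp : (fun k : ℕ => ((k ! : ℝ≥0∞))⁻¹ * ((k : ℝ≥0∞) ^ n) ^ p)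
      = fun k : ℕ => (k : ℝ≥0∞) ^ (n + 1) / (k ! : ℝ≥0∞) := by
    funext k
    have h1 : (((k : ℝ≥0∞)) ^ n) ^ p = (k : ℝ≥0∞) ^ (n + 1) := by
      rw [← ENNReal.rpow_natCast (k : ℝ≥0∞) n, ← ENNReal.rpow_mul]
      have h2 : (n : ℝ) * p = ((n + 1 : ℕ) : ℝ) := by
        rw [hpdef]; push_cast; field_simp
      rw [h2, ENNReal.rpow_natCast]
    rw [h1, div_eq_mul_inv, mul_comm]
  rw [hwg, hgp] at H
  have Hm : momo n ≤ EE ^ (1 - p⁻¹) * (momo (n + 1)) ^ p⁻¹ := H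
  rw [dobinski n, dobinski (n + 1)] at Hm
  have hrhs : EE ^ (1 - p⁻¹) * ((bell (n + 1) : ℝ≥0∞) * EE) ^ p⁻¹
      = EE * (bell (n + 1) : ℝ≥0∞) ^ p⁻¹ := by
    rw [ENNReal.mul_rpow_of_ne_top (ENNReal.natCast_ne_top _) hEEtop]
    rw [mul_comm ((bell (n + 1) : ℝ≥0∞) ^ p⁻¹) _, ← mul_assoc,
      ← ENNReal.rpow_add _ _ hEE0 hEEtop]
    rw [sub_add_cancel, ENNReal.rpow_one]
  rw [hrhs, mul_comm ((bell n : ℝ≥0∞)) EE] at Hm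
  have Hc : (bell n : ℝ≥0∞) ≤ (bell (n + 1) : ℝ≥0∞) ^ p⁻¹ :=
    (ENNReal.mul_le_mul_iff_right hEE0 hEEtop).mp Hm
  calc (bell n : ℝ≥0∞) ^ p ≤ ((bell (n + 1) : ℝ≥0∞) ^ p⁻¹) ^ p :=
        ENNReal.rpow_le_rpow Hc hp0.le
    _ = (bell (n + 1) : ℝ≥0∞) := by
        rw [← ENNReal.rpow_mul, hinvp, ENNReal.rpow_one]

theorem stmt_10 (n : ℕ) (hn : 1 ≤ n) :
    (bell n : ℝ) ^ (((n : ℝ) + 1) / n) ≤ (bell (n + 1) : ℝ) ∧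
    (bell n : ℝ) / (bell (n + 1) : ℝ) ≤ (bell n : ℝ) ^ (-(1 : ℝ) / n) := by
  have hn0 : (n : ℝ) ≠ 0 := Nat.cast_ne_zero.mpr (by omega)
  set p : ℝ := ((n : ℝ) + 1) / n with hpdef
  have hnpos : (0:ℝ) < n := by positivity
  have hp : 1 ≤ p := by rw [hpdef, le_div_iff₀ hnpos]; linarith
  have hp0 : (0:ℝ) < p := lt_of_lt_of_le one_pos hp
  have hb : (0:ℝ) < (bell n : ℝ) := by exact_mod_cast bell_pos n
  have hb1 : (0:ℝ) < (bell (n+1) : ℝ) := by exact_mod_cast bell_pos (n+1)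
  have h1 : (bell n : ℝ) ^ p ≤ (bell (n + 1) : ℝ) := by
    have hk := key n hn
    have hne : ((bell n : ℝ≥0∞) ^ p) ≠ ⊤ :=
      ENNReal.rpow_ne_top_of_nonneg hp0.le (ENNReal.natCast_ne_top _)
    have := (ENNReal.toReal_le_toReal hne (ENNReal.natCast_ne_top _)).mpr hk
    rwa [← ENNReal.toReal_rpow, ENNReal.toReal_natCast, ENNReal.toReal_natCast] at this
  refine ⟨h1, ?_⟩
  have hbp : (0:ℝ) < (bell n : ℝ) ^ p := Real.rpow_pos_of_pos hb p
  calc (bell n : ℝ) / (bell (n + 1) : ℝ) ≤ (bell n : ℝ) / (bell n : ℝ) ^ p := by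
        apply div_le_div_of_nonneg_left hb.le hbp h1
    _ = (bell n : ℝ) ^ ((1:ℝ) - p) := by
        rw [Real.rpow_sub hb, Real.rpow_one]
    _ = (bell n : ℝ) ^ (-(1:ℝ) / n) := by
        congr 1
        rw [hpdef]
        field_simp
        ring
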